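/- arXiv:2307.09428 — 3 statements merged into one kernel-verified Lean document; each statement's English description precedes it below -/
import Mathlib

section
/- Let A ∈ ℝ^{n×n}, B ∈ ℝ^{n×m}, let Q ∈ ℝ^{n×n} be symmetric positive semidefinite with (A, Q) Hautus-observable, and let R ∈ ℝ^{m×m} be symmetric positive definite. Let K₀ ∈ ℝ^{m×n} be such that A − BK₀ is Hurwitz, and suppose the sequences (P_k)_{k≥1} and (K_k)_{k≥1} satisfy, for every k ≥ 1: P_k is symmetric and solves (A − BK_{k−1})ᵀP_k + P_k(A − BK_{k−1}) + Q + K_{k−1}ᵀ R K_{k−1} = 0, and K_k = R⁻¹BᵀP_k. Then for every k ≥ 0 the matrix A − BK_k is Hurwitz. -/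
open Matrix Filter Topology
open scoped ENNReal NNReal ComplexOrder

section PolicyIterationAux

variable {d a b c : ℕ}

lemma mem_spectrum_iff_eigen (M : Matrix (Fin d) (Fin d) ℂ) (μ : ℂ) :
    μ ∈ spectrum ℂ M ↔ ∃ v : Fin d → ℂ, v ≠ 0 ∧ M *ᵥ v = μ • v := by
  rw [spectrum.mem_iff]
  constructor
  · intro h
    have hdet : (algebraMap ℂ (Matrix (Fin d) (Fin d) ℂ) μ - M).det = 0 := by
      by_contra hne
      exact h ((Matrix.isUnit_iff_isUnit_det _).mpr (isUnit_iff_ne_zero.mpr hne))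
    obtain ⟨v, hv, hMv⟩ := (Matrix.exists_mulVec_eq_zero_iff).mpr hdet
    refine ⟨v, hv, ?_⟩
    have : (algebraMap ℂ (Matrix (Fin d) (Fin d) ℂ) μ - M) *ᵥ v = 0 := hMv
    rw [Matrix.sub_mulVec] at this
    have halg : (algebraMap ℂ (Matrix (Fin d) (Fin d) ℂ) μ) *ᵥ v = μ • v := by
      simp [Matrix.algebraMap_eq_diagonal, Matrix.diagonal_mulVec_single]
      ext i
      simp [Matrix.mulVec_diagonal]
    rw [halg] at this
    exact (sub_eq_zero.mp this).symm
  · rintro ⟨v, hv, hMv⟩ hunit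
    have h0 : (algebraMap ℂ (Matrix (Fin d) (Fin d) ℂ) μ - M) *ᵥ v = 0 := by
      rw [Matrix.sub_mulVec]
      have halg : (algebraMap ℂ (Matrix (Fin d) (Fin d) ℂ) μ) *ᵥ v = μ • v := by
        ext i
        simp [Matrix.algebraMap_eq_diagonal, Matrix.mulVec_diagonal]
      rw [halg, hMv, sub_self]
    have hdet : (algebraMap ℂ (Matrix (Fin d) (Fin d) ℂ) μ - M).det = 0 :=
      (Matrix.exists_mulVec_eq_zero_iff).mp ⟨v, hv, h0⟩
    have := (Matrix.isUnit_iff_isUnit_det _).mp hunit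
    rw [hdet] at this
    exact not_isUnit_zero this

lemma star_dot_conjTranspose (M : Matrix (Fin a) (Fin b) ℂ) (u : Fin b → ℂ) (w : Fin a → ℂ) :
    star u ⬝ᵥ (Mᴴ *ᵥ w) = star (M *ᵥ u) ⬝ᵥ w := by
  rw [Matrix.star_mulVec, ← Matrix.dotProduct_mulVec]


section PowTendsto
attribute [local instance] Matrix.linftyOpNormedAddCommGroup Matrix.linftyOpNormedRing
  Matrix.linftyOpNormedAlgebra

lemma matrix_pow_tendsto_zero (T : Matrix (Fin d) (Fin d) ℂ)
    (hT : ∀ z ∈ spectrum ℂ T, ‖z‖ < 1) :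
    Tendsto (fun N : ℕ => (T ^ N : Matrix (Fin d) (Fin d) ℂ)) atTop (𝓝 0) := by
  rcases Nat.eq_zero_or_pos d with hd | hd
  · subst hd
    have : ∀ N, (T ^ N : Matrix (Fin 0) (Fin 0) ℂ) = 0 := fun N => Subsingleton.elim _ _
    simpa [this] using tendsto_const_nhds
  haveI : Nonempty (Fin d) := ⟨⟨0, hd⟩⟩
  haveI : CompleteSpace (Matrix (Fin d) (Fin d) ℂ) := FiniteDimensional.complete ℂ _
  haveI : Nontrivial (Matrix (Fin d) (Fin d) ℂ) :=
    ⟨0, 1, fun h => by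
      have := congr_fun (congr_fun h ⟨0, hd⟩) ⟨0, hd⟩
      simp [Matrix.one_apply] at this⟩
  have hρ : spectralRadius ℂ T < 1 := by
    have := spectrum.spectralRadius_lt_of_forall_lt (a := T) (r := 1)
      (fun z hz => by simpa [← NNReal.coe_lt_coe, coe_nnnorm] using hT z hz)
    simpa using this
  obtain ⟨r, hr1, hr2⟩ := ENNReal.lt_iff_exists_nnreal_btwn.mp hρ
  have hr2' : r < 1 := by exact_mod_cast hr2
  have hgel := spectrum.pow_nnnorm_pow_one_div_tendsto_nhds_spectralRadius T
  have hev : ∀ᶠ N : ℕ in atTop, ((‖T ^ N‖₊ : ℝ≥0∞) ^ (1 / (N : ℝ))) < r :=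
    hgel.eventually_lt_const hr1
  have hbound : ∀ᶠ N : ℕ in atTop, ‖(T ^ N : Matrix (Fin d) (Fin d) ℂ)‖ ≤ (r : ℝ) ^ N := by
    filter_upwards [hev, eventually_ge_atTop 1] with N hN hN1
    have hNne : (N : ℝ) ≠ 0 := by positivity
    have h1 : (‖T ^ N‖₊ : ℝ≥0∞) ≤ (r : ℝ≥0∞) ^ (N : ℝ) := by
      have := ENNReal.rpow_le_rpow hN.le (by positivity : (0:ℝ) ≤ (N : ℝ))
      rwa [← ENNReal.rpow_mul, one_div, inv_mul_cancel₀ hNne, ENNReal.rpow_one] at this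
    rw [← ENNReal.coe_rpow_of_nonneg _ (by positivity : (0:ℝ) ≤ (N : ℝ))] at h1
    have h2 : ‖T ^ N‖₊ ≤ r ^ (N : ℝ) := by exact_mod_cast h1
    calc ‖(T ^ N : Matrix (Fin d) (Fin d) ℂ)‖ ≤ ((r ^ (N:ℝ) : ℝ≥0) : ℝ) := h2
      _ = (r : ℝ) ^ N := by
        rw [NNReal.coe_rpow, Real.rpow_natCast]
  have hlim : Tendsto (fun N : ℕ => (r : ℝ) ^ N) atTop (𝓝 0) :=
    tendsto_pow_atTop_nhds_zero_of_lt_one r.coe_nonneg hr2'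
  exact squeeze_zero_norm' hbound hlim


lemma tendsto_quadform (T P : Matrix (Fin d) (Fin d) ℂ)
    (hT : ∀ z ∈ spectrum ℂ T, ‖z‖ < 1) (x : Fin d → ℂ) :
    Tendsto (fun N : ℕ => star ((T ^ N) *ᵥ x) ⬝ᵥ (P *ᵥ ((T ^ N) *ᵥ x))) atTop (𝓝 0) := by
  have hpow := matrix_pow_tendsto_zero T hT
  have hml : Continuous (fun M : Matrix (Fin d) (Fin d) ℂ => M *ᵥ x) := by
    let ℓ : Matrix (Fin d) (Fin d) ℂ →ₗ[ℂ] (Fin d → ℂ) :=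
      { toFun := fun M => M *ᵥ x
        map_add' := fun M N => Matrix.add_mulVec M N x
        map_smul' := fun c M => Matrix.smul_mulVec c M x }
    exact ℓ.continuous_of_finiteDimensional
  have hmulP : Continuous (fun w : Fin d → ℂ => P *ᵥ w) :=
    (Matrix.mulVecLin P).continuous_of_finiteDimensional
  have hdot : Continuous (fun p : (Fin d → ℂ) × (Fin d → ℂ) => p.1 ⬝ᵥ p.2) := by
    simp only [dotProduct]
    exact continuous_finset_sum _ fun i _ =>
      (((continuous_apply i).comp continuous_fst).mul ((continuous_apply i).comp continuous_snd))
  have hf : Continuous (fun M : Matrix (Fin d) (Fin d) ℂ =>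
      star (M *ᵥ x) ⬝ᵥ (P *ᵥ (M *ᵥ x))) := by
    exact hdot.comp ((continuous_star.comp hml).prodMk (hmulP.comp hml))
  have := hf.continuousAt.tendsto.comp hpow
  simpa [Function.comp_def] using this

end PowTendsto

/-- The key Lyapunov lemma: if `A` is (spectrally) stable, `P` is Hermitian and
`Aᴴ P + P A = -C` with `C` positive semidefinite, then `P` is positive semidefinite. -/
lemma lyap_psd (A P C : Matrix (Fin d) (Fin d) ℂ)
    (hA : ∀ μ ∈ spectrum ℂ A, μ.re < 0)
    (hP : P.IsHermitian) (hC : C.PosSemidef)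
    (heq : Aᴴ * P + P * A = -C) : P.PosSemidef := by
  -- `A - 1` is invertible
  have h1 : IsUnit (A - 1).det := by
    rw [isUnit_iff_ne_zero]
    intro hdet
    obtain ⟨v, hv, hv0⟩ := (Matrix.exists_mulVec_eq_zero_iff).mpr hdet
    rw [Matrix.sub_mulVec, Matrix.one_mulVec, sub_eq_zero] at hv0
    have : (1 : ℂ) ∈ spectrum ℂ A := (mem_spectrum_iff_eigen A 1).mpr ⟨v, hv, by simpa using hv0⟩
    have := hA 1 this
    norm_num at this
  set U : Matrix (Fin d) (Fin d) ℂ := (A - 1)⁻¹ with hU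
  have key1 : (A - 1) * U = 1 := Matrix.mul_nonsing_inv _ h1
  have key2 : U * (A - 1) = 1 := Matrix.nonsing_inv_mul _ h1
  set T : Matrix (Fin d) (Fin d) ℂ := (A + 1) * U with hT
  -- C = -(Aᴴ P + P A)
  have hC2 : C = -(Aᴴ * P + P * A) := by rw [heq, neg_neg]
  -- the transformed Lyapunov (Stein) equation
  have hplus : (A + 1)ᴴ * P * (A + 1) = (A - 1)ᴴ * P * (A - 1) - (C + C) := by
    rw [hC2, conjTranspose_add, conjTranspose_sub, conjTranspose_one]
    noncomm_ring
  have hUAh : Uᴴ * (A - 1)ᴴ = 1 := by rw [← conjTranspose_mul, key1, conjTranspose_one]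
  have stein : P = Tᴴ * P * T + (Uᴴ * C * U + Uᴴ * C * U) := by
    have e1 : Tᴴ * P * T = Uᴴ * ((A + 1)ᴴ * P * (A + 1)) * U := by
      rw [hT, conjTranspose_mul]; noncomm_ring
    rw [e1, hplus]
    have e2 : Uᴴ * ((A - 1)ᴴ * P * (A - 1) - (C + C)) * U
        = (Uᴴ * (A - 1)ᴴ) * P * ((A - 1) * U) - (Uᴴ * C * U + Uᴴ * C * U) := by
      noncomm_ring
    rw [e2, hUAh, key1, Matrix.one_mul, Matrix.mul_one]
    noncomm_ring
  set C' := Uᴴ * C * U + Uᴴ * C * U with hC'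
  have hC'psd : C'.PosSemidef := by
    have := (hC.conjTranspose_mul_mul_same U)
    exact this.add this
  -- eigenvalues of T are inside the unit disc
  have hTspec : ∀ z ∈ spectrum ℂ T, ‖z‖ < 1 := by
    intro lam hlam
    obtain ⟨v, hv, hv0⟩ := (mem_spectrum_iff_eigen T lam).mp hlam
    set u : Fin d → ℂ := U *ᵥ v with hu
    have hvu : (A - 1) *ᵥ u = v := by
      rw [hu, Matrix.mulVec_mulVec, key1, Matrix.one_mulVec]
    have hune : u ≠ 0 := by
      intro h0
      rw [h0, Matrix.mulVec_zero] at hvu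
      exact hv hvu.symm
    have hTu : (A + 1) *ᵥ u = lam • ((A - 1) *ᵥ u) := by
      rw [hvu]
      rw [hT, ← Matrix.mulVec_mulVec] at hv0
      exact hv0
    rw [Matrix.add_mulVec, Matrix.sub_mulVec, Matrix.one_mulVec, smul_sub] at hTu
    -- (1 - lam) • (A *ᵥ u) = -(1 + lam) • u
    have hkey : (1 - lam) • (A *ᵥ u) = (-(1 + lam)) • u := by
      have := hTu
      ext i
      have := congr_fun hTu i
      simp only [Pi.add_apply, Pi.sub_apply, Pi.smul_apply, smul_eq_mul] at this ⊢
      ring_nf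
      ring_nf at this
      linear_combination this
    have hlam1 : lam ≠ 1 := by
      intro h
      subst h
      simp only [sub_self, zero_smul] at hkey
      have : (-(1 + 1) : ℂ) • u = 0 := hkey.symm
      have h2 : ((-2 : ℂ)) • u = 0 := by norm_num at this ⊢; exact this
      have := smul_eq_zero.mp h2
      rcases this with h | h
      · norm_num at h
      · exact hune h
    set μ : ℂ := (1 + lam) / (lam - 1) with hμ
    have hne : (1 - lam) ≠ 0 := fun h => hlam1 (by linear_combination -h)
    have hne' : (lam - 1) ≠ 0 := sub_ne_zero.mpr hlam1
    have hAu : A *ᵥ u = μ • u := by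
      have h3 := congr_arg (fun w => (1 - lam)⁻¹ • w) hkey
      simp only [smul_smul, inv_mul_cancel₀ hne, one_smul] at h3
      rw [h3, hμ]
      congr 1
      field_simp
      ring
    have hμspec : μ ∈ spectrum ℂ A := (mem_spectrum_iff_eigen A μ).mpr ⟨u, hune, hAu⟩
    have hμre : μ.re < 0 := hA μ hμspec
    -- μ.re = (|lam|² - 1)/|lam - 1|²
    have hden : 0 < Complex.normSq (lam - 1) := Complex.normSq_pos.mpr hne'
    have hre : μ.re = (Complex.normSq lam - 1) / Complex.normSq (lam - 1) := by
      rw [hμ, Complex.div_re]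
      simp only [Complex.add_re, Complex.add_im, Complex.sub_re, Complex.sub_im,
        Complex.one_re, Complex.one_im, Complex.normSq_apply]
      field_simp
      ring
    rw [hre] at hμre
    have hnum : Complex.normSq lam - 1 < 0 := by
      by_contra hge
      push_neg at hge
      have := div_nonneg (by linarith : (0:ℝ) ≤ Complex.normSq lam - 1) hden.le
      linarith
    have hsq : Complex.normSq lam < 1 := by linarith
    have habs : ‖lam‖ ^ 2 < 1 := by
      rwa [← Complex.sq_norm] at hsq
    nlinarith [norm_nonneg lam]
  -- conclude positive semidefiniteness
  refine posSemidef_iff_dotProduct_mulVec.mpr ⟨hP, fun x => ?_⟩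
  set w : ℕ → (Fin d → ℂ) := fun N => (T ^ N) *ᵥ x with hw
  set q : ℕ → ℂ := fun N => star (w N) ⬝ᵥ (P *ᵥ (w N)) with hq
  have hwsucc : ∀ N, w (N + 1) = T *ᵥ (w N) := by
    intro N
    rw [hw]
    simp only []
    rw [Matrix.mulVec_mulVec, ← pow_succ']
  have hqstep : ∀ N, q N = q (N + 1) + star (w N) ⬝ᵥ (C' *ᵥ (w N)) := by
    intro N
    have e : star (w N) ⬝ᵥ ((Tᴴ * P * T) *ᵥ (w N)) = star (w (N + 1)) ⬝ᵥ (P *ᵥ (w (N + 1))) := by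
      rw [Matrix.mul_assoc, ← Matrix.mulVec_mulVec, star_dot_conjTranspose, ← hwsucc N,
        ← Matrix.mulVec_mulVec, ← hwsucc N]
    have e2 : star (w N) ⬝ᵥ (P *ᵥ (w N))
        = star (w N) ⬝ᵥ ((Tᴴ * P * T) *ᵥ (w N)) + star (w N) ⬝ᵥ (C' *ᵥ (w N)) := by
      conv_lhs => rw [stein]
      rw [Matrix.add_mulVec, dotProduct_add]
    rw [hq]
    simp only []
    rw [e2, e]
  have hqmono : ∀ N, q N ≤ q 0 := by
    intro N
    induction N with
    | zero => exact le_refl _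
    | succ N ih =>
      have hstep : q (N + 1) ≤ q N := by
        rw [hqstep N]
        exact le_add_of_nonneg_right (hC'psd.dotProduct_mulVec_nonneg (w N))
      exact hstep.trans ih
  have hq0 : Tendsto q atTop (𝓝 0) := tendsto_quadform T P hTspec x
  have hre0 : Tendsto (fun N => (q N).re) atTop (𝓝 0) := by
    have := (Complex.continuous_re.continuousAt (x := (0:ℂ))).tendsto.comp hq0
    exact this
  have hrele : ∀ N, (q N).re ≤ (q 0).re := fun N => (Complex.le_def.mp (hqmono N)).1
  have hre : 0 ≤ (q 0).re := le_of_tendsto hre0 (Filter.Eventually.of_forall hrele)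
  have him : (q 0).im = 0 := by
    have hsa : star (q 0) = q 0 := by
      rw [hq]
      simp only []
      rw [← Matrix.star_dotProduct]
      rw [Matrix.star_mulVec, hP.eq]
      rw [← Matrix.dotProduct_mulVec]
    have := congr_arg Complex.im hsa
    simp only [Complex.star_def, Complex.conj_im] at this
    linarith
  have hfin : (0 : ℂ) ≤ q 0 := by
    rw [Complex.le_def]
    refine ⟨by simpa using hre, by simp [him]⟩
  simpa [hq, hw] using hfin

lemma mapC_add (M N : Matrix (Fin a) (Fin b) ℝ) :
    (M + N).map Complex.ofReal = M.map Complex.ofReal + N.map Complex.ofReal := by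
  ext i j; simp

lemma mapC_neg (M : Matrix (Fin a) (Fin b) ℝ) :
    (-M).map Complex.ofReal = -(M.map Complex.ofReal) := by
  ext i j; simp

lemma mapC_zero : (0 : Matrix (Fin a) (Fin b) ℝ).map Complex.ofReal = 0 := by
  ext i j; simp

lemma mapC_mul (X : Matrix (Fin a) (Fin b) ℝ) (Y : Matrix (Fin b) (Fin c) ℝ) :
    (X * Y).map Complex.ofReal = X.map Complex.ofReal * Y.map Complex.ofReal := by
  ext i j
  simp [Matrix.mul_apply, Matrix.map_apply]

lemma mapC_conjTranspose (M : Matrix (Fin a) (Fin b) ℝ) :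
    (M.map Complex.ofReal)ᴴ = Mᵀ.map Complex.ofReal := by
  ext i j
  simp [Matrix.conjTranspose_apply, Matrix.map_apply, Complex.conj_ofReal]

lemma mapC_psd {Q : Matrix (Fin a) (Fin a) ℝ} (hQ : Q.PosSemidef) :
    (Q.map Complex.ofReal).PosSemidef := by
  obtain ⟨L, hL⟩ : ∃ L : Matrix (Fin a) (Fin a) ℝ, Q = Lᴴ * L := by
    open scoped MatrixOrder Matrix.Norms.L2Operator in
    obtain ⟨L, hL⟩ := CStarAlgebra.nonneg_iff_eq_star_mul_self.mp hQ.nonneg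
    exact ⟨L, by rw [hL, star_eq_conjTranspose]⟩
  have : Q.map Complex.ofReal = (L.map Complex.ofReal)ᴴ * (L.map Complex.ofReal) := by
    rw [hL, mapC_mul, mapC_conjTranspose, Matrix.conjTranspose_eq_transpose_of_trivial]
  rw [this]
  exact Matrix.posSemidef_conjTranspose_mul_self _


end PolicyIterationAux

/-- A real square matrix is Hurwitz if every eigenvalue of it, viewed as a complex
matrix, has strictly negative real part. -/
def Hurwitz {n : ℕ} (M : Matrix (Fin n) (Fin n) ℝ) : Prop :=
  ∀ μ ∈ spectrum ℂ (M.map Complex.ofReal), μ.re < 0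

/-- The pair `(A, Q)` is Hautus-observable if every (complex) eigenvector of `A`
is not in the kernel of `Q`. -/
def HautusObservable {n : ℕ} (A Q : Matrix (Fin n) (Fin n) ℝ) : Prop :=
  ∀ (μ : ℂ) (v : Fin n → ℂ), v ≠ 0 →
    (A.map Complex.ofReal).mulVec v = μ • v → (Q.map Complex.ofReal).mulVec v ≠ 0

/-- Kleinman policy iteration, property 1: every iterate `K_k` is stabilizing. -/
theorem policy_iteration_hurwitz {n m : ℕ}
    (A : Matrix (Fin n) (Fin n) ℝ) (B : Matrix (Fin n) (Fin m) ℝ)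
    (Q : Matrix (Fin n) (Fin n) ℝ) (R : Matrix (Fin m) (Fin m) ℝ)
    (hQ : Q.PosSemidef) (hobs : HautusObservable A Q) (hR : R.PosDef)
    (P : ℕ → Matrix (Fin n) (Fin n) ℝ) (K : ℕ → Matrix (Fin m) (Fin n) ℝ)
    (hK0 : Hurwitz (A - B * K 0))
    (hPsymm : ∀ k : ℕ, (P (k + 1)).IsSymm)
    (hLyap : ∀ k : ℕ,
      (A - B * K k)ᵀ * P (k + 1) + P (k + 1) * (A - B * K k) + Q + (K k)ᵀ * R * K k = 0)
    (hKiter : ∀ k : ℕ, K (k + 1) = R⁻¹ * Bᵀ * P (k + 1)) :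
    ∀ k : ℕ, Hurwitz (A - B * K k) := by
  intro k
  induction k with
  | zero => exact hK0
  | succ k ih =>
    have hRsym : Rᵀ = R := by
      have h := hR.1.eq
      rwa [Matrix.conjTranspose_eq_transpose_of_trivial] at h
    have hRdet : IsUnit R.det := hR.det_pos.ne'.isUnit
    -- (K (k+1)) satisfies R * (K (k+1)) = Bᵀ * (P (k+1))
    have hRK : R * (K (k+1)) = Bᵀ * (P (k+1)) := by
      rw [hKiter k, ← Matrix.mul_assoc, ← Matrix.mul_assoc,
        Matrix.mul_nonsing_inv _ hRdet, Matrix.one_mul]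
    have hPB : (P (k+1)) * B = (K (k+1))ᵀ * R := by
      have h := congr_arg Matrix.transpose hRK
      rw [Matrix.transpose_mul, Matrix.transpose_mul, Matrix.transpose_transpose, hRsym,
        (hPsymm k)] at h
      exact h.symm
    -- the real Lyapunov identity for the NEW closed loop matrix
    have h0 := hLyap k
    have hAP : Aᵀ * (P (k+1)) + (P (k+1)) * A
        = (K k)ᵀ * (R * (K (k+1))) + ((K (k+1))ᵀ * R) * (K k) - (K k)ᵀ * R * (K k) - Q := by
      have e1 : (A - B * (K k))ᵀ * (P (k+1)) = Aᵀ * (P (k+1)) - (K k)ᵀ * (Bᵀ * (P (k+1))) := by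
        rw [Matrix.transpose_sub, Matrix.transpose_mul, Matrix.sub_mul, Matrix.mul_assoc]
      have e2 : (P (k+1)) * (A - B * (K k)) = (P (k+1)) * A - ((P (k+1)) * B) * (K k) := by
        rw [Matrix.mul_sub, Matrix.mul_assoc]
      have h0' := h0
      rw [e1, e2, ← hRK, hPB] at h0'
      rw [← sub_eq_zero, ← h0']
      abel
    have hreal : (A - B * (K (k+1)))ᵀ * (P (k+1)) + (P (k+1)) * (A - B * (K (k+1)))
        + (Q + (K (k+1))ᵀ * R * (K (k+1)) + ((K (k+1)) - (K k))ᵀ * R * ((K (k+1)) - (K k))) = 0 := by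
      have e1 : (A - B * (K (k+1)))ᵀ * (P (k+1)) = Aᵀ * (P (k+1)) - (K (k+1))ᵀ * (R * (K (k+1))) := by
        rw [Matrix.transpose_sub, Matrix.transpose_mul, Matrix.sub_mul, Matrix.mul_assoc, hRK]
      have e2 : (P (k+1)) * (A - B * (K (k+1))) = (P (k+1)) * A - ((K (k+1))ᵀ * R) * (K (k+1)) := by
        rw [Matrix.mul_sub, Matrix.mul_assoc, ← Matrix.mul_assoc, hPB, Matrix.mul_assoc]
      have eΔ : ((K (k+1)) - (K k))ᵀ * R * ((K (k+1)) - (K k))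
          = (K (k+1))ᵀ * (R * (K (k+1))) - (K (k+1))ᵀ * (R * (K k)) - (K k)ᵀ * (R * (K (k+1))) + (K k)ᵀ * (R * (K k)) := by
        rw [Matrix.transpose_sub, Matrix.sub_mul, Matrix.sub_mul, Matrix.mul_sub, Matrix.mul_sub]
        simp only [Matrix.mul_assoc]
        abel
      rw [e1, e2, eΔ]
      simp only [Matrix.mul_assoc] at hAP ⊢
      rw [← sub_eq_zero] at hAP
      rw [← hAP]
      abel
    -- complexify
    have hrealC : ((A - B * (K (k+1))).map Complex.ofReal)ᴴ * ((P (k+1)).map Complex.ofReal)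
        + ((P (k+1)).map Complex.ofReal) * ((A - B * (K (k+1))).map Complex.ofReal)
        + ((Q.map Complex.ofReal)
          + (K (k+1) |>.map Complex.ofReal)ᴴ * (R.map Complex.ofReal) * (K (k+1) |>.map Complex.ofReal)
          + (((K (k+1)) - (K k)).map Complex.ofReal)ᴴ * (R.map Complex.ofReal)
              * (((K (k+1)) - (K k)).map Complex.ofReal)) = 0 := by
      simp only [mapC_conjTranspose, ← mapC_mul, ← mapC_add]
      rw [hreal]
      exact mapC_zero
    have hLyapkC : ((A - B * (K k)).map Complex.ofReal)ᴴ * ((P (k+1)).map Complex.ofReal)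
        + ((P (k+1)).map Complex.ofReal) * ((A - B * (K k)).map Complex.ofReal)
        = -((Q + (K k)ᵀ * R * (K k)).map Complex.ofReal) := by
      have hr : (A - B * (K k))ᵀ * (P (k+1)) + (P (k+1)) * (A - B * (K k)) = -(Q + (K k)ᵀ * R * (K k)) := by
        rw [← sub_eq_zero, ← h0]
        abel
      simp only [mapC_conjTranspose, ← mapC_mul, ← mapC_add, ← mapC_neg]
      rw [hr]
    -- (P (k+1)) is positive semidefinite over ℂ
    have hPherm : ((P (k+1)).map Complex.ofReal).IsHermitian := by
      show ((P (k+1)).map Complex.ofReal)ᴴ = (P (k+1)).map Complex.ofReal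
      rw [mapC_conjTranspose, (hPsymm k)]
    have hCpsd : ((Q + (K k)ᵀ * R * (K k)).map Complex.ofReal).PosSemidef :=
      mapC_psd (hQ.add (hR.posSemidef.mul_mul_conjTranspose_same (K k)ᵀ))
    have hPSD : ((P (k+1)).map Complex.ofReal).PosSemidef :=
      lyap_psd _ _ _ ih hPherm hCpsd hLyapkC
    -- now show the new closed loop is Hurwitz
    intro μ hμ
    by_contra hge
    push_neg at hge
    obtain ⟨v, hv, hv0⟩ := (mem_spectrum_iff_eigen _ μ).mp hμ
    set cA₁ := (A - B * (K (k+1))).map Complex.ofReal with hcA₁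
    set cP := (P (k+1)).map Complex.ofReal with hcP
    set cQ := Q.map Complex.ofReal with hcQ
    set cR := R.map Complex.ofReal with hcR
    set cK₁ := (K (k+1)).map Complex.ofReal with hcK₁
    set cΔ := ((K (k+1)) - (K k)).map Complex.ofReal with hcΔ
    have hSC : cA₁ᴴ * cP + cP * cA₁ = -(cQ + cK₁ᴴ * cR * cK₁ + cΔᴴ * cR * cΔ) :=
      eq_neg_of_add_eq_zero_left hrealC
    set p := star v ⬝ᵥ (cP *ᵥ v) with hp
    have hscal : star v ⬝ᵥ ((cA₁ᴴ * cP + cP * cA₁) *ᵥ v) = ((starRingEnd ℂ) μ + μ) * p := by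
      rw [Matrix.add_mulVec, dotProduct_add]
      have t1 : star v ⬝ᵥ ((cA₁ᴴ * cP) *ᵥ v) = (starRingEnd ℂ) μ * p := by
        rw [← Matrix.mulVec_mulVec, star_dot_conjTranspose, hv0, star_smul,
          smul_dotProduct]
        rfl
      have t2 : star v ⬝ᵥ ((cP * cA₁) *ᵥ v) = μ * p := by
        rw [← Matrix.mulVec_mulVec, hv0, Matrix.mulVec_smul, dotProduct_smul]
        rfl
      rw [t1, t2]
      ring
    set sQ := star v ⬝ᵥ (cQ *ᵥ v) with hsQ
    set s1 := star v ⬝ᵥ ((cK₁ᴴ * cR * cK₁) *ᵥ v) with hs1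
    set s2 := star v ⬝ᵥ ((cΔᴴ * cR * cΔ) *ᵥ v) with hs2
    have hsplit : ((starRingEnd ℂ) μ + μ) * p = -(sQ + s1 + s2) := by
      rw [← hscal, hSC, Matrix.neg_mulVec, dotProduct_neg]
      rw [Matrix.add_mulVec, Matrix.add_mulVec, dotProduct_add, dotProduct_add]
    have hsQnn : (0 : ℂ) ≤ sQ := (mapC_psd hQ).dotProduct_mulVec_nonneg v
    have hs1nn : (0 : ℂ) ≤ s1 := ((mapC_psd hR.posSemidef).conjTranspose_mul_mul_same cK₁).dotProduct_mulVec_nonneg v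
    have hs2nn : (0 : ℂ) ≤ s2 := ((mapC_psd hR.posSemidef).conjTranspose_mul_mul_same cΔ).dotProduct_mulVec_nonneg v
    have hμre : (starRingEnd ℂ) μ + μ = ((2 * μ.re : ℝ) : ℂ) := by
      rw [add_comm, Complex.add_conj]
    have hlhs : (0 : ℂ) ≤ ((starRingEnd ℂ) μ + μ) * p := by
      rw [hμre]
      apply mul_nonneg _ (hPSD.dotProduct_mulVec_nonneg v)
      rw [Complex.zero_le_real]
      linarith
    have hsum0 : sQ + s1 + s2 = 0 := by
      have hle : sQ + s1 + s2 ≤ 0 := by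
        rw [hsplit] at hlhs
        exact neg_nonneg.mp hlhs
      exact le_antisymm hle (add_nonneg (add_nonneg hsQnn hs1nn) hs2nn)
    have hsQ0 : sQ = 0 := by
      have h1 : sQ ≤ sQ + s1 + s2 := by
        calc sQ = sQ + 0 + 0 := by ring
        _ ≤ sQ + s1 + s2 := by gcongr
      rw [hsum0] at h1
      exact le_antisymm h1 hsQnn
    have hs10 : s1 = 0 := by
      have h1 : s1 ≤ sQ + s1 + s2 := by
        calc s1 = 0 + s1 + 0 := by ring
        _ ≤ sQ + s1 + s2 := by gcongr
      rw [hsum0] at h1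
      exact le_antisymm h1 hs1nn
    -- Q v = 0
    have hQv : cQ *ᵥ v = 0 := ((mapC_psd hQ).dotProduct_mulVec_zero_iff v).mp hsQ0
    -- (K (k+1)) v = 0
    have hKv : cK₁ *ᵥ v = 0 := by
      have hRw : star (cK₁ *ᵥ v) ⬝ᵥ (cR *ᵥ (cK₁ *ᵥ v)) = 0 := by
        rw [← hs10, hs1, Matrix.mul_assoc, ← Matrix.mulVec_mulVec, star_dot_conjTranspose,
          ← Matrix.mulVec_mulVec]
      have hR0 : cR *ᵥ (cK₁ *ᵥ v) = 0 :=
        ((mapC_psd hR.posSemidef).dotProduct_mulVec_zero_iff _).mp hRw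
      have hdetC : IsUnit cR.det := by
        have hdm : cR.det = Complex.ofReal R.det := by
          have h := RingHom.map_det Complex.ofRealHom R
          rw [hcR]
          exact h.symm
        rw [hdm, isUnit_iff_ne_zero]
        simp only [ne_eq, Complex.ofReal_eq_zero]
        exact hR.det_pos.ne'
      have h2 := congr_arg (fun w => cR⁻¹ *ᵥ w) hR0
      simp only [Matrix.mulVec_mulVec, Matrix.mulVec_zero] at h2
      rwa [← Matrix.mul_assoc, Matrix.nonsing_inv_mul _ hdetC, Matrix.one_mul] at h2
    -- contradiction with observability
    have hAv : (A.map Complex.ofReal) *ᵥ v = μ • v := by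
      have hAsplit : A.map Complex.ofReal = cA₁ + (B.map Complex.ofReal) * cK₁ := by
        rw [hcA₁, hcK₁, ← mapC_mul, ← mapC_add, sub_add_cancel]
      rw [hAsplit, Matrix.add_mulVec, ← Matrix.mulVec_mulVec, hKv, Matrix.mulVec_zero, add_zero,
        hv0]
    exact hobs μ v hv hAv hQv
end

section
/- Let A ∈ ℝ^{n×n}, B ∈ ℝ^{n×m}, C ∈ ℝ^{p×n}, and E ∈ ℝ^{q×q}. Suppose that for every eigenvalue λ ∈ ℂ of E, the complex (n+p)×(n+m) block matrix [[A − λIₙ, B],[C, 0]] has rank n + p. Then for every D ∈ ℝ^{n×q} and every F ∈ ℝ^{p×q} there exist X ∈ ℝ^{n×q} and U ∈ ℝ^{m×q} solving the regulator equations XE = AX + BU + D and CX + F = 0. -/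
open Matrix

namespace RegulatorAux

variable {a b : ℕ}

lemma trace_rep (Y M : Matrix (Fin a) (Fin b) ℝ) :
    Matrix.trace (Yᵀ * M) = ∑ i, ∑ j, Y i j * M i j := by
  simp only [Matrix.trace, Matrix.diag, Matrix.mul_apply, Matrix.transpose_apply]
  exact Finset.sum_comm

lemma eq_zero_of_trace_transpose_mul_self (G : Matrix (Fin a) (Fin b) ℝ)
    (h : Matrix.trace (Gᵀ * G) = 0) : G = 0 := by
  rw [trace_rep] at h
  ext i j
  have h1 : ∀ i ∈ Finset.univ, (0:ℝ) ≤ ∑ j, G i j * G i j := fun i _ =>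
    Finset.sum_nonneg fun j _ => mul_self_nonneg _
  have h2 := (Finset.sum_eq_zero_iff_of_nonneg h1).mp h i (Finset.mem_univ i)
  have h3 := (Finset.sum_eq_zero_iff_of_nonneg
    (fun j _ => mul_self_nonneg (G i j))).mp h2 j (Finset.mem_univ j)
  simpa [mul_self_eq_zero] using h3

lemma dual_rep (φ : Module.Dual ℝ (Matrix (Fin a) (Fin b) ℝ)) (M : Matrix (Fin a) (Fin b) ℝ) :
    φ M = ∑ i, ∑ j, (φ (Matrix.single i j 1)) * M i j := by
  have key : ∀ i j, φ (Matrix.single i j (M i j)) = φ (Matrix.single i j 1) * M i j := by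
    intro i j
    have h : Matrix.single i j (M i j) = (M i j) • Matrix.single i j 1 := by
      rw [smul_single, smul_eq_mul, mul_one]
    rw [h, _root_.map_smul, smul_eq_mul, mul_comm]
  conv_lhs => rw [matrix_eq_sum_single M]
  rw [map_sum]
  exact Finset.sum_congr rfl fun i _ => by rw [map_sum]; exact Finset.sum_congr rfl fun j _ => key i j

lemma injective_of_rank {n m p : ℕ} (M : Matrix (Fin n ⊕ Fin p) (Fin n ⊕ Fin m) ℂ)
    (h : M.rank = n + p) : Function.Injective Mᵀ.mulVec := by
  have h1 : Mᵀ.rank = n + p := by rw [Matrix.rank_transpose]; exact h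
  have h1' : Module.finrank ℂ (LinearMap.range (Mᵀ).mulVecLin) = n + p := h1
  have h2 := (Mᵀ).mulVecLin.finrank_range_add_finrank_ker
  have h3 : Module.finrank ℂ ((Fin n ⊕ Fin p) → ℂ) = n + p := by
    simp [Module.finrank_pi]
  rw [h1', h3] at h2
  have h4 : Module.finrank ℂ (LinearMap.ker (Mᵀ).mulVecLin) = 0 := by omega
  have h5 : LinearMap.ker (Mᵀ).mulVecLin = ⊥ := Submodule.finrank_eq_zero.mp h4
  rw [← Matrix.coe_mulVecLin]
  exact LinearMap.ker_eq_bot.mp h5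


lemma key_eigen {n m p q : ℕ} (Ac : Matrix (Fin n) (Fin n) ℂ) (Bc : Matrix (Fin n) (Fin m) ℂ)
    (Cc : Matrix (Fin p) (Fin n) ℂ) (Ec : Matrix (Fin q) (Fin q) ℂ)
    (hinj : ∀ μ ∈ spectrum ℂ Ec,
      Function.Injective
        ((fromBlocks (Ac - μ • 1) Bc Cc (0 : Matrix (Fin p) (Fin m) ℂ))ᵀ).mulVec)
    (Y : Matrix (Fin n) (Fin q) ℂ) (Z : Matrix (Fin p) (Fin q) ℂ)
    (h1 : Acᵀ * Y + Ccᵀ * Z = Y * Ecᵀ) (h2 : Bcᵀ * Y = 0) :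
    Y = 0 ∧ Z = 0 := by
  set f : Module.End ℂ (Fin q → ℂ) := (Ecᵀ).mulVecLin with hf
  have main : ∀ (μ : ℂ) (k : ℕ), ∀ v : Fin q → ℂ,
      ((f - μ • (1 : Module.End ℂ (Fin q → ℂ))) ^ k) v = 0 → Y *ᵥ v = 0 ∧ Z *ᵥ v = 0 := by
    intro μ k
    induction k with
    | zero =>
      intro v hv
      rw [pow_zero, Module.End.one_apply] at hv
      subst hv
      simp
    | succ k ih =>
      intro v hv
      by_cases hμ : μ ∈ spectrum ℂ Ec
      · have hw : ((f - μ • (1 : Module.End ℂ (Fin q → ℂ))) ^ k)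
            ((f - μ • (1 : Module.End ℂ (Fin q → ℂ))) v) = 0 := by
          rw [← Module.End.mul_apply, ← pow_succ]; exact hv
        obtain ⟨hYw, hZw⟩ := ih _ hw
        have hfv : (f - μ • (1 : Module.End ℂ (Fin q → ℂ))) v = Ecᵀ *ᵥ v - μ • v := by
          simp [hf, Matrix.mulVecLin_apply, Matrix.mulVec_transpose]
        have happ : Acᵀ *ᵥ (Y *ᵥ v) + Ccᵀ *ᵥ (Z *ᵥ v) = Y *ᵥ (Ecᵀ *ᵥ v) := by
          have h := congrArg (fun P : Matrix (Fin n) (Fin q) ℂ => P *ᵥ v) h1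
          simpa [Matrix.add_mulVec, ← Matrix.mulVec_mulVec] using h
        have hEv : Y *ᵥ (Ecᵀ *ᵥ v) = μ • (Y *ᵥ v) := by
          have hEv' : Ecᵀ *ᵥ v = μ • v + ((f - μ • (1 : Module.End ℂ (Fin q → ℂ))) v) := by
            rw [hfv]; abel
          rw [hEv', Matrix.mulVec_add, hYw, Matrix.mulVec_smul, add_zero]
        have hb : Bcᵀ *ᵥ (Y *ᵥ v) = 0 := by
          have h := congrArg (fun P : Matrix (Fin m) (Fin q) ℂ => P *ᵥ v) h2
          simpa [← Matrix.mulVec_mulVec] using h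
        have hker : (fromBlocks (Ac - μ • 1) Bc Cc (0 : Matrix (Fin p) (Fin m) ℂ))ᵀ *ᵥ
            (Sum.elim (Y *ᵥ v) (Z *ᵥ v)) = 0 := by
          rw [Matrix.fromBlocks_transpose, Matrix.fromBlocks_mulVec]
          have e1 : Sum.elim (Y *ᵥ v) (Z *ᵥ v) ∘ Sum.inl = Y *ᵥ v := rfl
          have e2 : Sum.elim (Y *ᵥ v) (Z *ᵥ v) ∘ Sum.inr = Z *ᵥ v := rfl
          rw [e1, e2]
          have hA : (Ac - μ • (1 : Matrix (Fin n) (Fin n) ℂ))ᵀ *ᵥ (Y *ᵥ v)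
              + Ccᵀ *ᵥ (Z *ᵥ v) = 0 := by
            have ht : (Ac - μ • (1 : Matrix (Fin n) (Fin n) ℂ))ᵀ
                = Acᵀ - μ • (1 : Matrix (Fin n) (Fin n) ℂ) := by
              rw [Matrix.transpose_sub, Matrix.transpose_smul, Matrix.transpose_one]
            rw [ht, Matrix.sub_mulVec, Matrix.smul_mulVec, Matrix.one_mulVec]
            have hc : Acᵀ *ᵥ (Y *ᵥ v) + Ccᵀ *ᵥ (Z *ᵥ v) = μ • (Y *ᵥ v) := happ.trans hEv
            rw [sub_add_eq_add_sub, hc, sub_self]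
          have hB' : Bcᵀ *ᵥ (Y *ᵥ v)
              + (0 : Matrix (Fin p) (Fin m) ℂ)ᵀ *ᵥ (Z *ᵥ v) = 0 := by
            rw [Matrix.transpose_zero, Matrix.zero_mulVec, add_zero, hb]
          rw [hA, hB']
          ext (i | i) <;> simp
        have h0 : (fromBlocks (Ac - μ • 1) Bc Cc (0 : Matrix (Fin p) (Fin m) ℂ))ᵀ *ᵥ
            (Sum.elim (Y *ᵥ v) (Z *ᵥ v))
            = (fromBlocks (Ac - μ • 1) Bc Cc (0 : Matrix (Fin p) (Fin m) ℂ))ᵀ *ᵥ 0 := by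
          rw [hker, Matrix.mulVec_zero]
        have hu := hinj μ hμ h0
        constructor
        · exact funext fun i => congrFun hu (Sum.inl i)
        · exact funext fun i => congrFun hu (Sum.inr i)
      · have hUnit : IsUnit (Ecᵀ - μ • (1 : Matrix (Fin q) (Fin q) ℂ)) := by
          rw [spectrum.notMem_iff] at hμ
          rw [Algebra.algebraMap_eq_smul_one] at hμ
          have hneg := hμ.neg
          rw [neg_sub] at hneg
          have ht : (Ec - μ • (1 : Matrix (Fin q) (Fin q) ℂ))ᵀ
              = Ecᵀ - μ • (1 : Matrix (Fin q) (Fin q) ℂ) := by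
            rw [Matrix.transpose_sub, Matrix.transpose_smul, Matrix.transpose_one]
          rw [← ht]
          exact (Matrix.isUnit_transpose _).mpr hneg
        have hinj2 : Function.Injective (Ecᵀ - μ • (1 : Matrix (Fin q) (Fin q) ℂ)).mulVec :=
          Matrix.mulVec_injective_iff_isUnit.mpr hUnit
        have hsub : ∀ x : Fin q → ℂ, (f - μ • (1 : Module.End ℂ (Fin q → ℂ))) x
            = (Ecᵀ - μ • (1 : Matrix (Fin q) (Fin q) ℂ)) *ᵥ x := by
          intro x
          simp [hf, Matrix.sub_mulVec, Matrix.smul_mulVec, Matrix.one_mulVec, Matrix.mulVec_transpose,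
            Matrix.mulVecLin_apply]
        have hx : (f - μ • (1 : Module.End ℂ (Fin q → ℂ)))
            (((f - μ • (1 : Module.End ℂ (Fin q → ℂ))) ^ k) v) = 0 := by
          rw [← Module.End.mul_apply, ← pow_succ']; exact hv
        have hzero : ((f - μ • (1 : Module.End ℂ (Fin q → ℂ))) ^ k) v = 0 := by
          apply hinj2
          rw [← hsub, hx, Matrix.mulVec_zero]
        exact ih v hzero
  have hall : ∀ v : Fin q → ℂ, Y *ᵥ v = 0 ∧ Z *ᵥ v = 0 := by
    intro v
    have htop := Module.End.iSup_maxGenEigenspace_eq_top f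
    set K' : Submodule ℂ (Fin q → ℂ) :=
      LinearMap.ker Y.mulVecLin ⊓ LinearMap.ker Z.mulVecLin with hK'
    have hle : ∀ μ : ℂ, f.maxGenEigenspace μ ≤ K' := by
      intro μ w hw
      obtain ⟨k, hk⟩ := (Module.End.mem_maxGenEigenspace f μ w).mp hw
      obtain ⟨hY', hZ'⟩ := main μ k w hk
      exact Submodule.mem_inf.mpr ⟨LinearMap.mem_ker.mpr (by simpa using hY'),
        LinearMap.mem_ker.mpr (by simpa using hZ')⟩
    have hK : (⊤ : Submodule ℂ (Fin q → ℂ)) ≤ K' := by rw [← htop]; exact iSup_le hle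
    have hv := hK (Submodule.mem_top (x := v))
    obtain ⟨hY', hZ'⟩ := Submodule.mem_inf.mp hv
    exact ⟨by simpa using LinearMap.mem_ker.mp hY', by simpa using LinearMap.mem_ker.mp hZ'⟩
  constructor
  · ext i j
    have h := (hall (Pi.single j 1)).1
    rw [Matrix.mulVec_single_one] at h
    simpa using congrFun h i
  · ext i j
    have h := (hall (Pi.single j 1)).2
    rw [Matrix.mulVec_single_one] at h
    simpa using congrFun h i



end RegulatorAux

open RegulatorAux

/-- Solvability of the regulator equations `XE = AX + BU + D`, `CX + F = 0` under the
Hautus-type rank condition at every eigenvalue of the exosystem matrix `E`. -/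
theorem regulator_equations_solvable {n m p q : ℕ}
    (A : Matrix (Fin n) (Fin n) ℝ) (B : Matrix (Fin n) (Fin m) ℝ)
    (C : Matrix (Fin p) (Fin n) ℝ) (E : Matrix (Fin q) (Fin q) ℝ)
    (hrank : ∀ lam ∈ spectrum ℂ (E.map Complex.ofReal),
      (Matrix.fromBlocks (A.map Complex.ofReal - lam • (1 : Matrix (Fin n) (Fin n) ℂ))
        (B.map Complex.ofReal) (C.map Complex.ofReal) (0 : Matrix (Fin p) (Fin m) ℂ)).rank
        = n + p) :
    ∀ (D : Matrix (Fin n) (Fin q) ℝ) (F : Matrix (Fin p) (Fin q) ℝ),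
      ∃ (X : Matrix (Fin n) (Fin q) ℝ) (U : Matrix (Fin m) (Fin q) ℝ),
        X * E = A * X + B * U + D ∧ C * X + F = 0 := by

  intro D F
  let L : (Matrix (Fin n) (Fin q) ℝ × Matrix (Fin m) (Fin q) ℝ) →ₗ[ℝ]
      (Matrix (Fin n) (Fin q) ℝ × Matrix (Fin p) (Fin q) ℝ) :=
    { toFun := fun XU => (XU.1 * E - A * XU.1 - B * XU.2, C * XU.1)
      map_add' := fun x y => by
        simp only [Prod.fst_add, Prod.snd_add, Prod.mk_add_mk, Prod.mk.injEq]
        constructor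
        · rw [Matrix.add_mul, Matrix.mul_add, Matrix.mul_add]; abel
        · rw [Matrix.mul_add]
      map_smul' := fun c x => by
        simp only [Prod.smul_fst, Prod.smul_snd, Prod.smul_mk, RingHom.id_apply, Prod.mk.injEq]
        constructor
        · rw [Matrix.smul_mul, Matrix.mul_smul, Matrix.mul_smul, ← smul_sub, ← smul_sub]
        · rw [Matrix.mul_smul] }
  have hL : ∀ XU, L XU = (XU.1 * E - A * XU.1 - B * XU.2, C * XU.1) := fun _ => rfl
  have hsurj : Function.Surjective L := by
    rw [← LinearMap.dualMap_injective_iff, ← LinearMap.ker_eq_bot, LinearMap.ker_eq_bot']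
    intro φ hφ
    have h0 : ∀ XU, φ (L XU) = 0 := fun XU => by
      simpa [LinearMap.dualMap_apply] using LinearMap.congr_fun hφ XU
    set Y : Matrix (Fin n) (Fin q) ℝ :=
      Matrix.of (fun i j => φ (Matrix.single i j 1, 0)) with hYdef
    set Z : Matrix (Fin p) (Fin q) ℝ :=
      Matrix.of (fun i j => φ (0, Matrix.single i j 1)) with hZdef
    have rep : ∀ (M : Matrix (Fin n) (Fin q) ℝ) (N : Matrix (Fin p) (Fin q) ℝ),
        φ (M, N) = Matrix.trace (Yᵀ * M) + Matrix.trace (Zᵀ * N) := by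
      intro M N
      have hMN : (M, N) = ((M, 0) : _ × Matrix (Fin p) (Fin q) ℝ)
          + ((0, N) : Matrix (Fin n) (Fin q) ℝ × _) := by
        rw [Prod.mk_add_mk, add_zero, zero_add]
      rw [hMN, map_add]
      congr 1
      · have hrep := dual_rep (φ.comp (LinearMap.inl ℝ _ _)) M
        simp only [LinearMap.comp_apply, LinearMap.inl_apply] at hrep
        rw [hrep, trace_rep]
        rfl
      · have hrep := dual_rep (φ.comp (LinearMap.inr ℝ _ _)) N
        simp only [LinearMap.comp_apply, LinearMap.inr_apply] at hrep
        rw [hrep, trace_rep]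
        rfl
    have hBY : Bᵀ * Y = 0 := by
      have h := h0 (0, Bᵀ * Y)
      rw [hL, rep] at h
      simp only [Matrix.zero_mul, Matrix.mul_zero, sub_zero, zero_sub, Matrix.mul_neg,
        Matrix.trace_neg, Matrix.trace_zero, add_zero] at h
      have e : Yᵀ * (B * (Bᵀ * Y)) = (Bᵀ * Y)ᵀ * (Bᵀ * Y) := by
        rw [Matrix.transpose_mul, Matrix.transpose_transpose, Matrix.mul_assoc]
      exact eq_zero_of_trace_transpose_mul_self _ (by rw [← e]; exact neg_eq_zero.mp h)
    have hG : Y * Eᵀ - Aᵀ * Y + Cᵀ * Z = 0 := by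
      set G := Y * Eᵀ - Aᵀ * Y + Cᵀ * Z with hGdef
      have h := h0 (G, (0 : Matrix (Fin m) (Fin q) ℝ))
      rw [hL, rep] at h
      dsimp only at h
      have key : Matrix.trace (Yᵀ * (G * E - A * G - B * (0 : Matrix (Fin m) (Fin q) ℝ))) + Matrix.trace (Zᵀ * (C * G))
          = Matrix.trace (Gᵀ * G) := by
        rw [Matrix.mul_zero, sub_zero, Matrix.mul_sub, Matrix.trace_sub]
        have t1 : Matrix.trace (Yᵀ * (G * E)) = Matrix.trace ((Y * Eᵀ)ᵀ * G) := by
          rw [← Matrix.mul_assoc, Matrix.trace_mul_comm, ← Matrix.mul_assoc,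
            Matrix.transpose_mul, Matrix.transpose_transpose]
        have t2 : Matrix.trace (Yᵀ * (A * G)) = Matrix.trace ((Aᵀ * Y)ᵀ * G) := by
          rw [Matrix.transpose_mul, Matrix.transpose_transpose, Matrix.mul_assoc]
        have t3 : Matrix.trace (Zᵀ * (C * G)) = Matrix.trace ((Cᵀ * Z)ᵀ * G) := by
          rw [Matrix.transpose_mul, Matrix.transpose_transpose, Matrix.mul_assoc]
        rw [t1, t2, t3, hGdef, Matrix.transpose_add, Matrix.transpose_sub,
          Matrix.add_mul, Matrix.sub_mul, Matrix.trace_add, Matrix.trace_sub]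
      exact eq_zero_of_trace_transpose_mul_self _ (key.symm.trans h)
    -- complexification
    have map_mul' : ∀ {a b c : ℕ} (P : Matrix (Fin a) (Fin b) ℝ) (Q : Matrix (Fin b) (Fin c) ℝ),
        (P * Q).map Complex.ofReal = P.map Complex.ofReal * Q.map Complex.ofReal := by
      intro a b c P Q
      exact Matrix.map_mul (L := P) (M := Q) (f := Complex.ofRealHom)
    have map_sub' : ∀ {a b : ℕ} (P Q : Matrix (Fin a) (Fin b) ℝ),
        (P - Q).map Complex.ofReal = P.map Complex.ofReal - Q.map Complex.ofReal := by
      intro a b P Q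
      exact Matrix.map_sub Complex.ofReal (fun x y => Complex.ofReal_sub x y) P Q
    have map_add' : ∀ {a b : ℕ} (P Q : Matrix (Fin a) (Fin b) ℝ),
        (P + Q).map Complex.ofReal = P.map Complex.ofReal + Q.map Complex.ofReal := by
      intro a b P Q
      exact Matrix.map_add Complex.ofReal (fun x y => Complex.ofReal_add x y) P Q
    have h1c : (A.map Complex.ofReal)ᵀ * (Y.map Complex.ofReal)
          + (C.map Complex.ofReal)ᵀ * (-(Z.map Complex.ofReal))
        = (Y.map Complex.ofReal) * (E.map Complex.ofReal)ᵀ := by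
      have hm := congrArg (fun P : Matrix (Fin n) (Fin q) ℝ => P.map Complex.ofReal) hG
      rw [map_add', map_sub', map_mul', map_mul', map_mul'] at hm
      rw [Matrix.transpose_map, Matrix.transpose_map, Matrix.transpose_map] at hm
      rw [Matrix.map_zero Complex.ofReal Complex.ofReal_zero] at hm
      have e2 : (Y.map Complex.ofReal) * (E.map Complex.ofReal)ᵀ
          - (A.map Complex.ofReal)ᵀ * (Y.map Complex.ofReal)
          = -((C.map Complex.ofReal)ᵀ * (Z.map Complex.ofReal)) :=
        eq_neg_of_add_eq_zero_left hm
      rw [Matrix.mul_neg, ← e2]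
      abel
    have h2c : (B.map Complex.ofReal)ᵀ * (Y.map Complex.ofReal) = 0 := by
      have hm := congrArg (fun P : Matrix (Fin m) (Fin q) ℝ => P.map Complex.ofReal) hBY
      rw [map_mul', Matrix.transpose_map] at hm
      rw [Matrix.map_zero Complex.ofReal Complex.ofReal_zero] at hm
      exact hm
    have hinj : ∀ μ ∈ spectrum ℂ (E.map Complex.ofReal),
        Function.Injective
          ((fromBlocks (A.map Complex.ofReal - μ • 1) (B.map Complex.ofReal)
            (C.map Complex.ofReal) (0 : Matrix (Fin p) (Fin m) ℂ))ᵀ).mulVec :=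
      fun μ hμ => injective_of_rank _ (hrank μ hμ)
    obtain ⟨hYc, hZc'⟩ := key_eigen (A.map Complex.ofReal) (B.map Complex.ofReal)
      (C.map Complex.ofReal) (E.map Complex.ofReal) hinj
      (Y.map Complex.ofReal) (-(Z.map Complex.ofReal)) h1c h2c
    have hZc : Z.map Complex.ofReal = 0 := neg_eq_zero.mp hZc'
    have hY0 : Y = 0 := by
      ext i j
      have := congrFun (congrFun hYc i) j
      simpa [Matrix.map_apply, Complex.ofReal_eq_zero] using this
    have hZ0 : Z = 0 := by
      ext i j
      have := congrFun (congrFun hZc i) j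
      simpa [Matrix.map_apply, Complex.ofReal_eq_zero] using this
    apply LinearMap.ext
    intro MN
    obtain ⟨M, N⟩ := MN
    rw [rep M N, hY0, hZ0]
    simp
  obtain ⟨⟨X, U⟩, hXU⟩ := hsurj (D, -F)
  have hpair : (X * E - A * X - B * U, C * X)
      = ((D, -F) : Matrix (Fin n) (Fin q) ℝ × Matrix (Fin p) (Fin q) ℝ) :=
    (hL (X, U)).symm.trans hXU
  have h1 : X * E - A * X - B * U = D := congrArg Prod.fst hpair
  have h2 : C * X = -F := congrArg Prod.snd hpair
  refine ⟨X, U, ?_, ?_⟩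
  · rw [← h1]; abel
  · rw [h2]; exact neg_add_cancel F
end

section
/- Let A ∈ ℝ^{n×n}, B ∈ ℝ^{n×m}, C ∈ ℝ^{p×n}, E ∈ ℝ^{q×q}, D ∈ ℝ^{n×q}, F ∈ ℝ^{p×q}. Let K ∈ ℝ^{m×n} be such that A − BK is Hurwitz, let (X, U) solve the regulator equations XE = AX + BU + D and CX + F = 0, and set L = U + KX. Let v : ℝ → ℝ^q and x : ℝ → ℝⁿ be differentiable with v′(t) = Ev(t) and x′(t) = Ax(t) + B(−Kx(t) + Lv(t)) + Dv(t) for all t ≥ 0. Then the tracking error e(t) = Cx(t) + Fv(t) tends to 0 as t → ∞. -/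
open Matrix Filter

/-- coefficient `exp(tμ)·t^k/k!` tends to zero when `Re μ < 0`. -/
lemma outputReg_tendsto_coeff (μ : ℂ) (hμ : μ.re < 0) (k : ℕ) :
    Tendsto (fun t : ℝ => Complex.exp (t * μ) * (t : ℂ) ^ k / ((Nat.factorial k) : ℂ)) atTop (nhds 0) := by
  rw [tendsto_zero_iff_norm_tendsto_zero]
  have hb : (0 : ℝ) < -μ.re := by linarith
  have h1 : Tendsto (fun t : ℝ => ((-μ.re) * t) ^ k * Real.exp (-((-μ.re) * t))) atTop (nhds 0) :=
    (Real.tendsto_pow_mul_exp_neg_atTop_nhds_zero k).comp (tendsto_id.const_mul_atTop hb)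
  have h2 : Tendsto (fun t : ℝ =>
      (1 / (-μ.re) ^ k / ((Nat.factorial k) : ℝ)) * (((-μ.re) * t) ^ k * Real.exp (-((-μ.re) * t))))
      atTop (nhds 0) := by
    simpa using h1.const_mul (1 / (-μ.re) ^ k / ((Nat.factorial k) : ℝ))
  apply h2.congr'
  filter_upwards [eventually_ge_atTop (0 : ℝ)] with t ht
  have hk : ((-μ.re) : ℝ) ^ k ≠ 0 := pow_ne_zero _ (ne_of_gt hb)
  have hfact : ((Nat.factorial k : ℝ)) ≠ 0 := Nat.cast_ne_zero.2 (Nat.factorial_ne_zero k)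
  rw [norm_div, norm_mul, norm_pow]
  rw [Complex.norm_exp,
    Complex.norm_real, Real.norm_eq_abs, Complex.norm_natCast]
  have : ((t : ℂ) * μ).re = t * μ.re := by simp
  rw [this, abs_of_nonneg ht, mul_pow]
  have : Real.exp (-(-μ.re * t)) = Real.exp (t * μ.re) := by ring_nf
  rw [this]
  field_simp


lemma outputReg_chain_solution {n : ℕ} (Mc : Matrix (Fin n) (Fin n) ℂ) (μ : ℂ) (hμ : μ.re < 0)
    (w : ℕ → Fin n → ℂ) (hw : ∀ k, Mc.mulVec (w k) = μ • w k + w (k + 1))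
    (K : ℕ) (hK : w (K + 1) = 0) :
    ∃ g : ℝ → Fin n → ℂ, g 0 = w 0 ∧ (∀ t, HasDerivAt g (Mc.mulVec (g t)) t) ∧
      Tendsto g atTop (nhds 0) := by
  set c : ℕ → ℝ → ℂ := fun k t => Complex.exp (t * μ) * (t : ℂ) ^ k / (Nat.factorial k : ℂ)
    with hc
  refine ⟨fun t => ∑ k ∈ Finset.range (K + 1), c k t • w k, ?_, ?_, ?_⟩
  · show ∑ k ∈ Finset.range (K + 1), c k 0 • w k = w 0
    rw [Finset.sum_eq_single_of_mem 0 (Finset.mem_range.2 (Nat.succ_pos K))]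
    · simp [hc]
    · intro k _ hk0
      simp [hc, zero_pow hk0]
  · intro t
    have hderiv : ∀ k ∈ Finset.range (K + 1), HasDerivAt (fun t : ℝ => c k t • w k)
        ((μ * c k t + (k : ℂ) * (Complex.exp (t * μ) * (t : ℂ) ^ (k - 1) /
          (Nat.factorial k : ℂ))) • w k) t := by
      intro k _
      have h1 : HasDerivAt (fun t : ℝ => (t : ℂ)) 1 t := by
        simpa using (hasDerivAt_id t).ofReal_comp
      have hexp : HasDerivAt (fun t : ℝ => Complex.exp ((t : ℂ) * μ))
          (Complex.exp ((t : ℂ) * μ) * μ) t := by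
        simpa using (h1.mul_const μ).cexp
      have hpow : HasDerivAt (fun t : ℝ => (t : ℂ) ^ k) ((k : ℂ) * (t : ℂ) ^ (k - 1)) t := by
        simpa [Function.comp_def] using (hasDerivAt_pow k ((t : ℝ) : ℂ)).comp t h1
      have := ((hexp.mul hpow).div_const (Nat.factorial k : ℂ)).smul_const (w k)
      refine this.congr_deriv (congrArg (· • w k) ?_)
      simp only [hc]
      ring
    have hsum := HasDerivAt.sum hderiv
    refine (HasDerivAt.fun_sum hderiv).congr_deriv (Eq.symm ?_)
    -- show `Mc.mulVec (g t) = the sum of derivatives`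
    have hmv : Mc.mulVec (∑ k ∈ Finset.range (K + 1), c k t • w k)
        = ∑ k ∈ Finset.range (K + 1), c k t • Mc.mulVec (w k) := by
      simp only [Matrix.mulVec_sum, Matrix.mulVec_smul]
    rw [hmv]
    have hre : ∀ k : ℕ, ((k : ℂ) * (Complex.exp (t * μ) * (t : ℂ) ^ (k - 1) /
        (Nat.factorial k : ℂ))) • w k
        = (if k = 0 then (0 : Fin n → ℂ) else c (k - 1) t • w k) := by
      intro k
      cases k with
      | zero => simp
      | succ k' =>
        simp only [Nat.succ_ne_zero, if_false]
        have h1 : ((k' : ℂ) + 1) ≠ 0 := Nat.cast_add_one_ne_zero k'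
        have h2 : ((Nat.factorial k' : ℂ)) ≠ 0 := Nat.cast_ne_zero.2 (Nat.factorial_ne_zero k')
        have hcoef : (((k' + 1 : ℕ) : ℂ) * (Complex.exp (t * μ) * (t : ℂ) ^ (k' + 1 - 1) /
            (Nat.factorial (k' + 1) : ℂ))) = c k' t := by
          rw [hc, Nat.add_sub_cancel, Nat.factorial_succ]
          push_cast
          field_simp
        rw [hcoef, Nat.add_sub_cancel]
    calc ∑ k ∈ Finset.range (K + 1), c k t • Mc.mulVec (w k)
        = ∑ k ∈ Finset.range (K + 1), (μ • (c k t • w k) + c k t • w (k + 1)) := by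
          refine Finset.sum_congr rfl fun k _ => ?_
          rw [hw k, smul_add, smul_comm]
      _ = μ • ∑ k ∈ Finset.range (K + 1), c k t • w k
            + ∑ k ∈ Finset.range (K + 1), c k t • w (k + 1) := by
          rw [Finset.sum_add_distrib, Finset.smul_sum]
      _ = ∑ k ∈ Finset.range (K + 1), (μ * c k t + (k : ℂ) * (Complex.exp (t * μ) *
            (t : ℂ) ^ (k - 1) / (Nat.factorial k : ℂ))) • w k := by
          rw [eq_comm]
          have : ∀ k ∈ Finset.range (K + 1), (μ * c k t + (k : ℂ) * (Complex.exp (t * μ) *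
              (t : ℂ) ^ (k - 1) / (Nat.factorial k : ℂ))) • w k
              = μ • (c k t • w k) + (if k = 0 then (0 : Fin n → ℂ) else c (k - 1) t • w k) := by
            intro k _
            rw [add_smul, ← hre k, mul_smul]
          rw [Finset.sum_congr rfl this, Finset.sum_add_distrib, ← Finset.smul_sum]
          congr 1
          rw [Finset.sum_range_succ' (fun k => if k = 0 then (0 : Fin n → ℂ) else c (k - 1) t • w k) K]
          simp only [if_pos rfl, add_zero, Nat.succ_ne_zero, if_false, Nat.add_sub_cancel]
          rw [Finset.sum_range_succ (fun k => c k t • w (k + 1)) K, hK]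
          simp
  · have h := tendsto_finset_sum (Finset.range (K + 1))
      (f := fun (k : ℕ) (t : ℝ) => c k t • w k) (a := fun _ => (0 : Fin n → ℂ))
      (fun k _ => by simpa using (outputReg_tendsto_coeff μ hμ k).smul_const (w k))
    simpa using h


lemma outputReg_unique {n : ℕ} (Mc : Matrix (Fin n) (Fin n) ℂ) (f g : ℝ → Fin n → ℂ)
    (hf : ∀ t : ℝ, 0 ≤ t → HasDerivAt f (Mc.mulVec (f t)) t)
    (hg : ∀ t : ℝ, HasDerivAt g (Mc.mulVec (g t)) t)
    (h0 : f 0 = g 0) {t : ℝ} (ht : 0 ≤ t) : f t = g t := by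
  set Lc : (Fin n → ℂ) →L[ℂ] (Fin n → ℂ) :=
    LinearMap.toContinuousLinearMap (Matrix.mulVecLin Mc) with hLc
  have hcoe : (fun y : Fin n → ℂ => Mc.mulVec y) = ⇑Lc := by
    funext y; simp [hLc]
  have hlip : ∀ s : ℝ, LipschitzOnWith ‖Lc‖₊ (fun y : Fin n → ℂ => Mc.mulVec y) Set.univ := by
    intro s
    rw [hcoe]
    exact Lc.lipschitz.lipschitzOnWith
  exact ODE_solution_unique_of_mem_Icc_right (v := fun _ y => Mc.mulVec y)
    (s := fun _ => Set.univ) (fun s _ => hlip s)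
    (fun s hs => ((hf s hs.1).continuousAt).continuousWithinAt)
    (fun s hs => (hf s hs.1).hasDerivWithinAt)
    (fun _ _ => Set.mem_univ _)
    (fun s _ => ((hg s).continuousAt).continuousWithinAt)
    (fun s _ => (hg s).hasDerivWithinAt)
    (fun _ _ => Set.mem_univ _) h0 ⟨ht, le_rfl⟩

lemma outputReg_hurwitz_tendsto {n : ℕ} (M : Matrix (Fin n) (Fin n) ℝ) (hM : Hurwitz M)
    (z : ℝ → Fin n → ℝ) (hz : ∀ t : ℝ, 0 ≤ t → HasDerivAt z (M.mulVec (z t)) t) :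
    Tendsto z atTop (nhds 0) := by
  set Mc : Matrix (Fin n) (Fin n) ℂ := M.map Complex.ofReal with hMc
  set zc : ℝ → Fin n → ℂ := fun t i => ((z t i : ℝ) : ℂ) with hzc
  have hcast : ∀ y : Fin n → ℝ,
      Mc.mulVec (fun i => ((y i : ℝ) : ℂ)) = fun i => (((M.mulVec y) i : ℝ) : ℂ) := by
    intro y; funext i
    simp [hMc, Matrix.mulVec, dotProduct, Matrix.map_apply]
  have hzcd : ∀ t : ℝ, 0 ≤ t → HasDerivAt zc (Mc.mulVec (zc t)) t := by
    intro t ht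
    rw [hzc, hasDerivAt_pi]
    intro i
    have h := (hasDerivAt_pi.1 (hz t ht) i).ofReal_comp
    have : Mc.mulVec (zc t) i = (((M.mulVec (z t)) i : ℝ) : ℂ) := by
      rw [hzc]; rw [hcast (z t)]
    show HasDerivAt (fun s : ℝ => ((z s i : ℝ) : ℂ)) ((Mc.mulVec (zc t)) i) t
    rw [this]
    exact h
  -- decompose `zc 0` into generalized eigenvectors and produce a global decaying solution
  set f : Module.End ℂ (Fin n → ℂ) := Matrix.toLinAlgEquiv' Mc with hfdef
  have hmem : zc 0 ∈ ⨆ μ : ℂ, f.maxGenEigenspace μ := by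
    rw [Module.End.iSup_maxGenEigenspace_eq_top]; trivial
  have hC : ∃ g : ℝ → Fin n → ℂ, g 0 = zc 0 ∧ (∀ t : ℝ, HasDerivAt g (Mc.mulVec (g t)) t) ∧
      Tendsto g atTop (nhds 0) := by
    refine Submodule.iSup_induction (motive := fun y => ∃ g : ℝ → Fin n → ℂ, g 0 = y ∧
        (∀ t : ℝ, HasDerivAt g (Mc.mulVec (g t)) t) ∧ Tendsto g atTop (nhds 0))
      (fun μ : ℂ => f.maxGenEigenspace μ) hmem ?_ ?_ ?_
    · -- generalized eigenvectors
      intro μ y hy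
      by_cases hy0 : y = 0
      · exact ⟨fun _ => 0, by simp [hy0], fun t => by
          simpa [Matrix.mulVec_zero] using (hasDerivAt_const t (0 : Fin n → ℂ)),
          tendsto_const_nhds⟩
      obtain ⟨k, hk⟩ := (Module.End.mem_maxGenEigenspace f μ y).1 hy
      -- μ is an eigenvalue, hence in the spectrum, hence `μ.re < 0`
      have hev : f.HasEigenvalue μ := by
        apply Module.End.hasEigenvalue_of_hasGenEigenvalue (k := k)
        rw [Module.End.hasGenEigenvalue_iff]
        apply Submodule.ne_bot_iff _ |>.2
        refine ⟨y, ?_, hy0⟩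
        rw [Module.End.genEigenspace_nat, LinearMap.mem_ker]
        exact hk
      have hμre : μ.re < 0 := by
        apply hM
        have h1 : μ ∈ spectrum ℂ f := Module.End.hasEigenvalue_iff_mem_spectrum.1 hev
        rw [hfdef] at h1
        rwa [AlgEquiv.spectrum_eq Matrix.toLinAlgEquiv' Mc] at h1
      -- build the chain
      set w : ℕ → Fin n → ℂ := fun m => ((f - μ • (1 : Module.End ℂ (Fin n → ℂ))) ^ m) y with hwdef
      have hw : ∀ m, Mc.mulVec (w m) = μ • w m + w (m + 1) := by
        intro m
        have h2 : w (m + 1) = (f - μ • 1) (w m) := by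
          rw [hwdef]
          simp only [pow_succ']
          rfl
        rw [h2]
        simp only [LinearMap.sub_apply, LinearMap.smul_apply, Module.End.one_apply]
        have h3 : f (w m) = Mc.mulVec (w m) := Matrix.toLinAlgEquiv'_apply Mc (w m)
        rw [h3]
        abel
      have hK1 : w (k + 1) = 0 := by
        have h2 : w (k + 1) = (f - μ • 1) (w k) := by
          rw [hwdef]; simp only [pow_succ']; rfl
        rw [h2, show w k = 0 from hk, map_zero]
      have hw0 : w 0 = y := by rw [hwdef]; simp
      obtain ⟨g, hg0, hgd, hgt⟩ := outputReg_chain_solution Mc μ hμre w hw k hK1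
      exact ⟨g, by rw [hg0, hw0], hgd, hgt⟩
    · -- zero
      exact ⟨fun _ => 0, rfl, fun t => by
        simpa [Matrix.mulVec_zero] using (hasDerivAt_const t (0 : Fin n → ℂ)),
        tendsto_const_nhds⟩
    · -- additivity
      rintro y₁ y₂ ⟨g₁, h₁0, h₁d, h₁t⟩ ⟨g₂, h₂0, h₂d, h₂t⟩
      refine ⟨fun t => g₁ t + g₂ t, by simp [h₁0, h₂0], fun t => ?_, by
        simpa using h₁t.add h₂t⟩
      have := (h₁d t).fun_add (h₂d t)
      simpa [Matrix.mulVec_add] using this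
  obtain ⟨g, hg0, hgd, hgt⟩ := hC
  have heq : ∀ᶠ t in atTop, zc t = g t := by
    filter_upwards [eventually_ge_atTop (0 : ℝ)] with t ht
    exact outputReg_unique Mc zc g hzcd hgd hg0.symm ht
  have hzct : Tendsto zc atTop (nhds 0) := hgt.congr' (heq.mono fun t h => h.symm)
  rw [tendsto_pi_nhds] at hzct ⊢
  intro i
  have hre := (Complex.continuous_re.tendsto 0).comp (hzct i)
  have : (fun t => ((zc t i).re)) = fun t => z t i := by
    funext t; simp [hzc]
  rw [← this]
  simpa [Function.comp_def] using hre


/-- The feedback-feedforward control `u = −Kx + Lv` with `L = U + KX` solves the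
linear output regulation problem: the tracking error `e = Cx + Fv` tends to zero. -/
theorem output_regulation_tracking_error_tendsto_zero {n m p q : ℕ}
    (A : Matrix (Fin n) (Fin n) ℝ) (B : Matrix (Fin n) (Fin m) ℝ)
    (C : Matrix (Fin p) (Fin n) ℝ) (E : Matrix (Fin q) (Fin q) ℝ)
    (D : Matrix (Fin n) (Fin q) ℝ) (F : Matrix (Fin p) (Fin q) ℝ)
    (K : Matrix (Fin m) (Fin n) ℝ) (hK : Hurwitz (A - B * K))
    (X : Matrix (Fin n) (Fin q) ℝ) (U : Matrix (Fin m) (Fin q) ℝ)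
    (hreg1 : X * E = A * X + B * U + D) (hreg2 : C * X + F = 0)
    (L : Matrix (Fin m) (Fin q) ℝ) (hL : L = U + K * X)
    (v : ℝ → Fin q → ℝ) (x : ℝ → Fin n → ℝ)
    (hv : ∀ t : ℝ, 0 ≤ t → HasDerivAt v (E.mulVec (v t)) t)
    (hx : ∀ t : ℝ, 0 ≤ t → HasDerivAt x
      (A.mulVec (x t) + B.mulVec (-(K.mulVec (x t)) + L.mulVec (v t)) + D.mulVec (v t)) t) :
    Tendsto (fun t : ℝ => C.mulVec (x t) + F.mulVec (v t)) atTop (nhds 0) := by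
  have hmat : X * E = (A - B * K) * X + B * L + D := by
    rw [hreg1, hL, Matrix.sub_mul, Matrix.mul_add, Matrix.mul_assoc]
    abel
  have expand : ∀ (xx : Fin n → ℝ) (vv : Fin q → ℝ),
      A.mulVec xx + B.mulVec (-(K.mulVec xx) + L.mulVec vv) + D.mulVec vv
        - X.mulVec (E.mulVec vv) = (A - B * K).mulVec (xx - X.mulVec vv) := by
    intro xx vv
    have h2 : X.mulVec (E.mulVec vv)
        = (A - B * K).mulVec (X.mulVec vv) + B.mulVec (L.mulVec vv) + D.mulVec vv := by
      rw [Matrix.mulVec_mulVec, hmat]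
      simp only [Matrix.add_mulVec, ← Matrix.mulVec_mulVec]
    rw [h2]
    simp only [Matrix.mulVec_add, Matrix.mulVec_neg, Matrix.mulVec_sub, Matrix.sub_mulVec,
      ← Matrix.mulVec_mulVec]
    abel
  set z : ℝ → Fin n → ℝ := fun t => x t - X.mulVec (v t) with hzdef
  have hz : ∀ t : ℝ, 0 ≤ t → HasDerivAt z ((A - B * K).mulVec (z t)) t := by
    intro t ht
    have hXv : HasDerivAt (fun s : ℝ => X.mulVec (v s)) (X.mulVec (E.mulVec (v t))) t := by
      have h := (LinearMap.toContinuousLinearMap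
        (Matrix.mulVecLin X)).hasFDerivAt.comp_hasDerivAt t (hv t ht)
      simpa [Function.comp_def] using h
    have h := (hx t ht).sub hXv
    rw [expand (x t) (v t)] at h
    exact h
  have hzt := outputReg_hurwitz_tendsto (A - B * K) hK z hz
  have hCX : C * X = -F := eq_neg_of_add_eq_zero_left hreg2
  have hswap : (fun t : ℝ => C.mulVec (x t) + F.mulVec (v t))
      = fun t : ℝ => C.mulVec (z t) := by
    funext t
    rw [hzdef]
    simp only [Matrix.mulVec_sub, Matrix.mulVec_mulVec, hCX, Matrix.neg_mulVec,
      sub_neg_eq_add]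
  rw [hswap]
  have hcont := ((LinearMap.toContinuousLinearMap
    (Matrix.mulVecLin C)).continuous.tendsto 0).comp hzt
  simpa [Function.comp_def] using hcont
end
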